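/- Let A be a filtered ℂ-algebra with Gr A a finitely generated commutative domain, Z ⊆ Z(A) a central subalgebra, and J a two-sided ideal of A with J ∩ Z = I. If A/IA is a domain and GK(A/J) = GK(A/IA), then J = IA. -/

import Mathlib

open Filter

/-- The Gelfand–Kirillov dimension of the quotient of the `ℂ`-algebra `A` by a (two-sided)
ideal `J` (given as the underlying `ℂ`-subspace): the supremum over all finite-dimensional
subspaces `V ⊆ A` of `limsup_m log dim(image of V^m in A/J) / log m`. -/
noncomputable def gkDimQuot {A : Type*} [Ring A] [Algebra ℂ A] (J : Submodule ℂ A) :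
    EReal :=
  ⨆ (V : Submodule ℂ A) (_ : FiniteDimensional ℂ V),
    Filter.limsup
      (fun m : ℕ =>
        ((Real.log (Module.finrank ℂ ((V ^ m).map J.mkQ)) / Real.log m : ℝ) : EReal))
      Filter.atTop


open Module Submodule

section Core
variable {A : Type*} [Ring A] [Algebra ℂ A]

lemma powMono (F₁ : Submodule ℂ A) (hone : (1:A) ∈ F₁) : Monotone (fun n => F₁ ^ n) := by
  apply monotone_nat_of_le_succ
  intro n a ha
  have : a * 1 ∈ F₁ ^ n * F₁ := Submodule.mul_mem_mul ha hone
  rwa [mul_one, ← pow_succ] at this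

lemma fdPow (F₁ : Submodule ℂ A) [FiniteDimensional ℂ F₁] (n : ℕ) :
    FiniteDimensional ℂ (F₁ ^ n : Submodule ℂ A) := by
  rw [← Submodule.fg_iff_finiteDimensional] at *
  exact Submodule.FG.pow ‹_› n

lemma finrank_map_add_finrank_inf_ker {M N : Type*} [AddCommGroup M] [Module ℂ M]
    [AddCommGroup N] [Module ℂ N] (F : Submodule ℂ M) [FiniteDimensional ℂ F]
    (h : M →ₗ[ℂ] N) :
    finrank ℂ (F.map h) + finrank ℂ ↥(F ⊓ LinearMap.ker h) = finrank ℂ F := by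
  have e1 := LinearMap.finrank_range_add_finrank_ker (h.domRestrict F)
  rw [LinearMap.range_domRestrict, LinearMap.ker_domRestrict] at e1
  have e2 : Submodule.comap F.subtype (LinearMap.ker h)
      = Submodule.comap F.subtype (F ⊓ LinearMap.ker h) := by
    ext x; simp [x.2]
  rw [e2, (Submodule.comapSubtypeEquivOfLe (p := F ⊓ LinearMap.ker h) (q := F)
    inf_le_left).finrank_eq] at e1
  exact e1

lemma key_step (F₁ : Submodule ℂ A) [FiniteDimensional ℂ F₁] (x : A) (d : ℕ)
    (hxd : x ∈ F₁ ^ d) (IA JJ : Submodule ℂ A) (hIJ : IA ≤ JJ)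
    (hJx : ∀ v : A, x * v ∈ JJ)
    (hIx : ∀ v : A, v ∈ IA → x * v ∈ IA)
    (hreg : ∀ v : A, x * v ∈ IA → v ∈ IA) (m : ℕ) :
    finrank ℂ ((F₁ ^ m).map IA.mkQ) + finrank ℂ ((F₁ ^ (m + d)).map JJ.mkQ) ≤
      finrank ℂ ((F₁ ^ (m + d)).map IA.mkQ) := by
  classical
  set L : A →ₗ[ℂ] A := LinearMap.mulLeft ℂ x with hL
  set Fm : Submodule ℂ A := F₁ ^ m with hFm
  set Fmd : Submodule ℂ A := F₁ ^ (m + d) with hFmd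
  haveI : FiniteDimensional ℂ Fm := fdPow F₁ m
  haveI : FiniteDimensional ℂ Fmd := fdPow F₁ (m + d)
  haveI : FiniteDimensional ℂ (Fm.map L) := Module.Finite.map _ _
  haveI : FiniteDimensional ℂ ↥(Fm ⊓ IA) := Submodule.finiteDimensional_of_le inf_le_left
  haveI : FiniteDimensional ℂ ↥(Fmd ⊓ IA) := Submodule.finiteDimensional_of_le inf_le_left
  haveI : FiniteDimensional ℂ ↥(Fmd ⊓ JJ) := Submodule.finiteDimensional_of_le inf_le_left
  haveI : FiniteDimensional ℂ ↥(Fm.map L ⊓ IA) := Submodule.finiteDimensional_of_le inf_le_left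
  have hWle : Fm.map L ≤ Fmd ⊓ JJ := by
    rintro w ⟨v, hv, rfl⟩
    refine ⟨?_, hJx v⟩
    have : x * v ∈ F₁ ^ d * F₁ ^ m := Submodule.mul_mem_mul hxd hv
    rwa [← pow_add, add_comm d m] at this
  have hKle : LinearMap.ker L ≤ IA := by
    intro v hv
    have hv0 : x * v = 0 := hv
    exact hreg v (by rw [hv0]; exact IA.zero_mem)
  have e5 : Fm.map L ⊓ IA = (Fm ⊓ IA).map L := by
    apply le_antisymm
    · rintro w ⟨⟨v, hv, rfl⟩, hw⟩
      exact ⟨v, ⟨hv, hreg v hw⟩, rfl⟩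
    · rintro w ⟨v, ⟨hv1, hv2⟩, rfl⟩
      exact ⟨⟨v, hv1, rfl⟩, hIx v hv2⟩
  have e7 : Fm ⊓ IA ⊓ LinearMap.ker L = Fm ⊓ LinearMap.ker L := by
    apply le_antisymm
    · exact inf_le_inf_right _ inf_le_left
    · intro v hv
      exact ⟨⟨hv.1, hKle hv.2⟩, hv.2⟩
  have e1 := finrank_map_add_finrank_inf_ker Fm IA.mkQ
  have e2 := finrank_map_add_finrank_inf_ker Fmd IA.mkQ
  have e3 := finrank_map_add_finrank_inf_ker Fmd JJ.mkQ
  have e4 := finrank_map_add_finrank_inf_ker Fm L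
  have e6 := finrank_map_add_finrank_inf_ker (Fm ⊓ IA) L
  rw [Submodule.ker_mkQ] at e1 e2 e3
  rw [e7, ← e5] at e6
  have e8 := Submodule.finrank_sup_add_finrank_inf_eq (Fm.map L) (Fmd ⊓ IA)
  have e9 : finrank ℂ ↥(Fm.map L ⊔ (Fmd ⊓ IA)) ≤ finrank ℂ ↥(Fmd ⊓ JJ) :=
    Submodule.finrank_mono (sup_le hWle (inf_le_inf_left _ hIJ))
  have e10 : finrank ℂ ↥(Fm.map L ⊓ (Fmd ⊓ IA)) ≤ finrank ℂ ↥(Fm.map L ⊓ IA) :=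
    Submodule.finrank_mono (inf_le_inf_left _ inf_le_right)
  omega
end Core

section Straighten
variable {A : Type*} [Ring A] [Algebra ℂ A]

lemma list_prod_mem_pow (F₁ : Submodule ℂ A) :
    ∀ (l : List A), (∀ a ∈ l, a ∈ F₁) → l.prod ∈ F₁ ^ l.length := by
  intro l
  induction l with
  | nil =>
    intro _
    have : (1:A) ∈ F₁ ^ 0 := by rw [pow_zero]; exact Submodule.one_le.1 le_rfl
    simpa using this
  | cons a t ih =>
    intro h
    have : a * t.prod ∈ F₁ * F₁ ^ t.length :=
      Submodule.mul_mem_mul (h a (by simp)) (ih fun b hb => h b (by simp [hb]))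
    simpa [pow_succ', List.length_cons] using this

lemma perm_diff (F₁ : Submodule ℂ A)
    (hc : ∀ a ∈ F₁, ∀ b ∈ F₁, a * b - b * a ∈ F₁) :
    ∀ {l l' : List A}, l.Perm l' → (∀ a ∈ l, a ∈ F₁) →
      l.prod - l'.prod ∈ F₁ ^ (l.length - 1) := by
  intro l l' hp
  induction hp with
  | nil => intro _; simpa using Submodule.zero_mem _
  | @cons a t t' h ih =>
    intro hm
    have hmt : ∀ b ∈ t, b ∈ F₁ := fun b hb => hm b (by simp [hb])
    rcases Nat.eq_zero_or_pos t.length with hl | hl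
    · have ht : t = [] := List.length_eq_zero_iff.1 hl
      subst ht
      have ht' : t' = [] := h.symm.eq_nil
      subst ht'
      simpa using Submodule.zero_mem _
    · have hdiff := ih hmt
      have : a * (t.prod - t'.prod) ∈ F₁ * F₁ ^ (t.length - 1) :=
        Submodule.mul_mem_mul (hm a (by simp)) hdiff
      rw [← pow_succ'] at this
      have hle : t.length - 1 + 1 = (a :: t).length - 1 := by
        simp [List.length_cons]; omega
      rw [hle] at this
      simpa [List.prod_cons, mul_sub] using this
  | swap a b t =>
    intro hm
    have hP : t.prod ∈ F₁ ^ t.length := list_prod_mem_pow F₁ t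
      (fun c hc' => hm c (by simp [hc']))
    have hab := hc b (hm b (by simp)) a (hm a (by simp))
    have : (b * a - a * b) * t.prod ∈ F₁ * F₁ ^ t.length :=
      Submodule.mul_mem_mul hab hP
    rw [← pow_succ'] at this
    simpa [List.prod_cons, sub_mul, mul_assoc] using this
  | trans h1 h2 ih1 ih2 =>
    intro hm
    have := Submodule.add_mem _ (ih1 hm) (by
      rw [h1.length_eq]
      exact ih2 (fun a ha => hm a (h1.mem_iff.2 ha)))
    simpa using this
end Straighten

section Span
variable {A : Type*} [Ring A] [Algebra ℂ A]


lemma pow_le_span_sorted (F₁ : Submodule ℂ A) (hone : (1:A) ∈ F₁)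
    (hc : ∀ a ∈ F₁, ∀ b ∈ F₁, a * b - b * a ∈ F₁)
    {b : ℕ} (x : Fin b → A) (hx : F₁ = Submodule.span ℂ (Set.range x)) :
    ∀ m : ℕ, F₁ ^ m ≤ Submodule.span ℂ
      ((fun l : List (Fin b) => (l.map x).prod) ''
        {l | l.Pairwise (· ≤ ·) ∧ l.length ≤ m}) := by
  have hxF : ∀ i, x i ∈ F₁ := fun i => hx ▸ Submodule.subset_span ⟨i, rfl⟩
  intro m
  induction m with
  | zero =>
    rw [pow_zero, Submodule.one_le]
    exact Submodule.subset_span ⟨[], ⟨List.Pairwise.nil, le_refl 0⟩, by simp⟩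
  | succ m ih =>
    rw [pow_succ]
    calc F₁ ^ m * F₁ ≤ Submodule.span ℂ _ * Submodule.span ℂ (Set.range x) := by
          exact mul_le_mul' ih (le_of_eq hx)
      _ ≤ _ := by
          rw [Submodule.span_mul_span]
          rw [Submodule.span_le]
          rintro _ ⟨_, ⟨l, ⟨hls, hll⟩, rfl⟩, _, ⟨j, rfl⟩, rfl⟩
          -- goal : (l.map x).prod * x j ∈ span (sorted, length ≤ m+1)
          have hcat : (l.map x).prod * x j = ((l ++ [j]).map x).prod := by
            simp
          have hperm : ((l ++ [j]).map x).Perm ((List.orderedInsert (· ≤ ·) j l).map x) :=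
            ((List.perm_append_singleton j l).trans
              (List.perm_orderedInsert (· ≤ ·) j l).symm).map x
          have hmem : ∀ a ∈ (l ++ [j]).map x, a ∈ F₁ := by
            rintro a ha
            rcases List.mem_map.1 ha with ⟨i, _, rfl⟩
            exact hxF i
          have hdiff := perm_diff F₁ hc hperm hmem
          have hlen : ((l ++ [j]).map x).length - 1 = l.length := by simp
          rw [hlen] at hdiff
          have hsortmem : ((List.orderedInsert (· ≤ ·) j l).map x).prod ∈
              Submodule.span ℂ ((fun l : List (Fin b) => (l.map x).prod) ''
                {l | l.Pairwise (· ≤ ·) ∧ l.length ≤ m + 1}) := by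
            refine Submodule.subset_span ⟨_, ⟨?_, ?_⟩, rfl⟩
            · exact List.Pairwise.orderedInsert j l hls
            · rw [List.orderedInsert_length]; omega
          have herr : ((l ++ [j]).map x).prod - ((List.orderedInsert (· ≤ ·) j l).map x).prod ∈
              Submodule.span ℂ ((fun l : List (Fin b) => (l.map x).prod) ''
                {l | l.Pairwise (· ≤ ·) ∧ l.length ≤ m + 1}) := by
            have hmono : F₁ ^ l.length ≤ F₁ ^ m := powMono F₁ hone hll
            have h2 := ih (hmono hdiff)
            refine Submodule.span_mono ?_ h2
            rintro p ⟨l', ⟨hp1, hp2⟩, rfl⟩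
            exact ⟨l', ⟨hp1, hp2.trans (Nat.le_succ m)⟩, rfl⟩
          have hh := Submodule.add_mem _ hsortmem herr
          show (List.map x l).prod * x j ∈ _
          rw [hcat]
          simpa using hh
end Span

section Count
variable {A : Type*} [Ring A] [Algebra ℂ A]

lemma card_sorted_le (b m : ℕ) :
    ∃ hS : ({l : List (Fin b) | l.Pairwise (· ≤ ·) ∧ l.length ≤ m}).Finite,
      hS.toFinset.card ≤ (m + 1) ^ b := by
  classical
  have hS : ({l : List (Fin b) | l.Pairwise (· ≤ ·) ∧ l.length ≤ m}).Finite :=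
    (List.finite_length_le (Fin b) m).subset (fun l hl => hl.2)
  refine ⟨hS, ?_⟩
  have : hS.toFinset.card ≤ (Finset.univ : Finset (Fin b → Fin (m + 1))).card := by
    apply Finset.card_le_card_of_injOn
      (fun l => (fun i => ⟨min (l.count i) m, Nat.lt_succ_of_le (min_le_right _ _)⟩ :
        Fin b → Fin (m + 1)))
    · intro l hl; exact Finset.mem_univ _
    · intro l1 h1 l2 h2 hf
      simp only [Set.Finite.coe_toFinset, Set.mem_setOf_eq] at h1 h2
      have hc1 : ∀ i : Fin b, l1.count i = l2.count i := by
        intro i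
        have := congrFun hf i
        have e1 : min (l1.count i) m = l1.count i :=
          min_eq_left ((List.count_le_length (a := i) (l := l1)).trans h1.2)
        have e2 : min (l2.count i) m = l2.count i :=
          min_eq_left ((List.count_le_length (a := i) (l := l2)).trans h2.2)
        simpa [e1, e2, Fin.ext_iff] using this
      have hperm : l1.Perm l2 := List.perm_iff_count.2 hc1
      exact List.Perm.eq_of_pairwise' h1.1 h2.1 hperm
  simpa using this
end Count

section Bound
variable {A : Type*} [Ring A] [Algebra ℂ A]

lemma finrank_pow_le (F₁ : Submodule ℂ A) [FiniteDimensional ℂ F₁] (hone : (1:A) ∈ F₁)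
    (hc : ∀ a ∈ F₁, ∀ b ∈ F₁, a * b - b * a ∈ F₁) (m : ℕ) :
    finrank ℂ (F₁ ^ m : Submodule ℂ A) ≤ (m + 1) ^ (finrank ℂ F₁) := by
  classical
  set b := finrank ℂ F₁
  let β : Basis (Fin b) ℂ F₁ := Module.finBasis ℂ F₁
  let x : Fin b → A := fun i => (β i : A)
  have hx : F₁ = Submodule.span ℂ (Set.range x) := by
    have himg : Set.range x = F₁.subtype '' Set.range β := by
      ext a; simp [x]
    rw [himg, ← Submodule.map_span, β.span_eq, Submodule.map_subtype_top]
  obtain ⟨hS, hcard⟩ := card_sorted_le b m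
  have hle := pow_le_span_sorted F₁ hone hc x hx m
  set f : List (Fin b) → A := fun l => (l.map x).prod
  have himg2 : f '' {l | l.Pairwise (· ≤ ·) ∧ l.length ≤ m} = ↑(hS.toFinset.image f) := by
    simp [Set.Finite.coe_toFinset]
  rw [himg2] at hle
  haveI : FiniteDimensional ℂ (Submodule.span ℂ ((hS.toFinset.image f : Finset A) : Set A)) := by
    exact FiniteDimensional.span_of_finite ℂ (hS.toFinset.image f).finite_toSet
  have h1 : finrank ℂ (F₁ ^ m : Submodule ℂ A) ≤
      finrank ℂ (Submodule.span ℂ (↑(hS.toFinset.image f) : Set A)) := by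
    haveI : FiniteDimensional ℂ (F₁ ^ m : Submodule ℂ A) := by
      exact (Submodule.fg_iff_finiteDimensional _).1
        (Submodule.FG.pow ((Submodule.fg_iff_finiteDimensional F₁).2 ‹_›) m)
    exact Submodule.finrank_mono hle
  have h2 := finrank_span_finset_le_card (R := ℂ) (hS.toFinset.image f)
  have h3 : (hS.toFinset.image f).card ≤ hS.toFinset.card := Finset.card_image_le
  calc finrank ℂ (F₁ ^ m : Submodule ℂ A) ≤ _ := h1
    _ ≤ (hS.toFinset.image f).card := h2
    _ ≤ hS.toFinset.card := h3
    _ ≤ (m + 1) ^ b := hcard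
end Bound

noncomputable def lgr (u : ℕ → ℕ) : EReal :=
  Filter.limsup (fun n : ℕ => ((Real.log (u n) / Real.log n : ℝ) : EReal)) Filter.atTop

lemma lgr_nonneg (u : ℕ → ℕ) : 0 ≤ lgr u := by
  apply Filter.le_limsup_of_frequently_le'
  apply Filter.Eventually.frequently
  filter_upwards [Filter.eventually_ge_atTop 1] with n hn
  have h1 : (0:ℝ) ≤ Real.log (u n) / Real.log n :=
    div_nonneg (by
      rcases Nat.eq_zero_or_pos (u n) with h | h
      · simp [h]
      · exact Real.log_nonneg (by exact_mod_cast h)) (Real.log_natCast_nonneg n)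
  exact_mod_cast h1

lemma lgr_le_of_poly (u : ℕ → ℕ) (b : ℕ) (h : ∀ n, u n ≤ (n + 1) ^ b) :
    lgr u ≤ ((2 * b : ℕ) : ℝ) := by
  apply Filter.limsup_le_of_le
  · isBoundedDefault
  filter_upwards [Filter.eventually_ge_atTop 2] with n hn
  have hlogn : (0:ℝ) < Real.log n := by
    apply Real.log_pos; exact_mod_cast hn
  have hub : Real.log (u n) ≤ (2 * b : ℕ) * Real.log n := by
    have h2 : Real.log (u n) ≤ Real.log ((n + 1 : ℕ) ^ b) := by
      rcases Nat.eq_zero_or_pos (u n) with h0 | h0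
      · rw [h0]
        simp only [Nat.cast_zero, Real.log_zero]
        exact Real.log_nonneg (by exact_mod_cast Nat.one_le_pow _ _ (Nat.succ_pos n))
      · apply Real.log_le_log (by exact_mod_cast h0)
        exact_mod_cast h n
    have h3 : Real.log (((n + 1 : ℕ) ^ b : ℕ)) = b * Real.log (n + 1 : ℕ) := by
      push_cast
      rw [Real.log_pow]
    have h4 : Real.log (n + 1 : ℕ) ≤ 2 * Real.log n := by
      have : ((n + 1 : ℕ) : ℝ) ≤ (n : ℝ) ^ 2 := by
        have : n + 1 ≤ n ^ 2 := by nlinarith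
        exact_mod_cast this
      calc Real.log (n + 1 : ℕ) ≤ Real.log ((n:ℝ) ^ 2) :=
            Real.log_le_log (by positivity) this
        _ = 2 * Real.log n := by rw [Real.log_pow]; push_cast; ring
    calc Real.log (u n) ≤ b * Real.log (n+1 : ℕ) := by rw [← h3]; push_cast; exact_mod_cast h2
      _ ≤ b * (2 * Real.log n) := by
          apply mul_le_mul_of_nonneg_left h4 (by positivity)
      _ = (2 * b : ℕ) * Real.log n := by push_cast; ring
  have : Real.log (u n) / Real.log n ≤ (2 * b : ℕ) := by
    rw [div_le_iff₀ hlogn]; exact hub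
  exact_mod_cast this

lemma ereal_le_of_forall_real {X y : EReal} (h : ∀ c : ℝ, y < (c : EReal) → X ≤ (c : EReal)) :
    X ≤ y := by
  by_contra hcon
  push_neg at hcon
  obtain ⟨c, hyc, hcX⟩ := EReal.exists_between_coe_real hcon
  exact absurd (h c hyc) (not_le.2 hcX)

lemma lgr_comp_le (u v : ℕ → ℕ) (h1 : ∀ n, 1 ≤ u n) (N : ℕ) (hN : 1 ≤ N)
    (hv : ∀ m, v m ≤ u (N * m)) :
    Filter.limsup (fun m : ℕ => ((Real.log (v m) / Real.log m : ℝ) : EReal)) Filter.atTop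
      ≤ lgr u := by
  apply ereal_le_of_forall_real
  intro c hc
  have hc0 : (0:ℝ) < c := by
    have := lt_of_le_of_lt (lgr_nonneg u) hc
    exact_mod_cast this
  have hev : ∀ᶠ n in Filter.atTop,
      ((Real.log (u n) / Real.log n : ℝ) : EReal) < (c : EReal) :=
    Filter.eventually_lt_of_limsup_lt hc
  apply ereal_le_of_forall_real
  intro c' hcc'
  have hcc'r : c < c' := by exact_mod_cast hcc'
  apply Filter.limsup_le_of_le
  · isBoundedDefault
  have tN : Filter.Tendsto (fun m : ℕ => N * m) Filter.atTop Filter.atTop :=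
    Filter.tendsto_atTop_mono (fun m => Nat.le_mul_of_pos_left m hN) Filter.tendsto_id
  have tlog : Filter.Tendsto (fun m : ℕ => c * Real.log N / Real.log m)
      Filter.atTop (nhds 0) := by
    apply Filter.Tendsto.div_atTop (tendsto_const_nhds)
    exact Real.tendsto_log_atTop.comp tendsto_natCast_atTop_atTop
  filter_upwards [Filter.eventually_ge_atTop 2, tN.eventually hev,
    tlog.eventually_lt_const (sub_pos.2 hcc'r)] with m hm2 hevm htm
  have hlogm : (0:ℝ) < Real.log m := Real.log_pos (by exact_mod_cast hm2)
  have hlogNm : (0:ℝ) < Real.log ((N * m : ℕ)) := by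
    apply Real.log_pos
    have h2 : 2 ≤ N * m := le_trans hm2 (Nat.le_mul_of_pos_left m hN)
    have h2' : (2:ℝ) ≤ ((N*m : ℕ) : ℝ) := by exact_mod_cast h2
    linarith
  -- log (u (N*m)) < c * log (N*m)
  have hUm : Real.log (u (N * m)) < c * Real.log ((N*m : ℕ)) := by
    have := hevm
    simp only [EReal.coe_lt_coe_iff] at this
    calc Real.log (u (N*m)) = Real.log (u (N*m)) / Real.log ((N*m:ℕ)) * Real.log ((N*m:ℕ)) := by
          rw [div_mul_cancel₀ _ (ne_of_gt hlogNm)]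
      _ < c * Real.log ((N*m:ℕ)) := by
          apply mul_lt_mul_of_pos_right this hlogNm
  have hvm : Real.log (v m) ≤ Real.log (u (N * m)) := by
    rcases Nat.eq_zero_or_pos (v m) with h0 | h0
    · rw [h0]; simp only [Nat.cast_zero, Real.log_zero]
      exact Real.log_nonneg (by exact_mod_cast h1 (N*m))
    · exact Real.log_le_log (by exact_mod_cast h0) (by exact_mod_cast hv m)
  have hNm : Real.log ((N*m : ℕ)) = Real.log N + Real.log m := by
    push_cast
    rw [Real.log_mul (by positivity) (by
      have : (0:ℝ) < m := by exact_mod_cast lt_of_lt_of_le two_pos hm2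
      positivity)]
  have key : Real.log (v m) / Real.log m ≤ c' := by
    have h5 : Real.log (v m) / Real.log m ≤ c * Real.log ((N*m:ℕ)) / Real.log m :=
      (div_le_div_iff_of_pos_right hlogm).2 (hvm.trans hUm.le)
    have h6 : c * Real.log ((N*m:ℕ)) / Real.log m = c * Real.log N / Real.log m + c := by
      rw [hNm]
      field_simp
    rw [h6] at h5
    linarith [htm.le]
  exact_mod_cast key

lemma lgr_growth (f g : ℕ → ℕ) (hg1 : ∀ n, 1 ≤ g n) (d : ℕ) (hd : 1 ≤ d)
    (hgrow : ∀ n, 1 ≤ n → n * g n ≤ f (n + n * d))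
    (c e : ℝ) (hc : (c : EReal) < lgr g) (hce : e < 1 + c) (hcneg : -1 < c) :
    (e : EReal) ≤ lgr f := by
  have hfreq : ∃ᶠ n in Filter.atTop,
      (c : EReal) < ((Real.log (g n) / Real.log n : ℝ) : EReal) :=
    Filter.frequently_lt_of_lt_limsup (by isBoundedDefault) hc
  set K : ℝ := Real.log ((1 + d : ℕ)) with hK
  have hK0 : 0 ≤ K := Real.log_natCast_nonneg _
  set δ : ℝ := 1 + c - e with hδ
  have hδ0 : 0 < δ := by simp only [hδ]; linarith
  apply Filter.le_limsup_of_frequently_le'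
  have hcomb := hfreq.and_eventually
    ((Filter.eventually_ge_atTop 2).and
      ((Real.tendsto_log_atTop.comp tendsto_natCast_atTop_atTop).eventually_ge_atTop (e*K/δ)))
  rw [Filter.frequently_atTop] at hcomb ⊢
  intro M
  obtain ⟨n, hnM, hgn, hn2, hlogn_ge⟩ := hcomb M
  refine ⟨n + n * d, le_trans hnM (Nat.le_add_right _ _), ?_⟩
  have hn1 : 1 ≤ n := le_trans one_le_two hn2
  have hlogn : (0:ℝ) < Real.log n := Real.log_pos (by exact_mod_cast hn2)
  have hgr : c * Real.log n < Real.log (g n) := by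
    rw [EReal.coe_lt_coe_iff] at hgn
    calc c * Real.log n = c * Real.log n := rfl
      _ < Real.log (g n) := by
          have := (lt_div_iff₀ hlogn).1 hgn
          linarith [this]
  set m : ℕ := n + n * d with hm
  have hmn : m = n * (1 + d) := by rw [hm]; ring
  have hfm : (n : ℝ) * (g n : ℝ) ≤ (f m : ℝ) := by exact_mod_cast hgrow n hn1
  have hgn0 : (0:ℝ) < g n := by exact_mod_cast hg1 n
  have hn0 : (0:ℝ) < n := by exact_mod_cast hn1
  have hlogf : (1 + c) * Real.log n ≤ Real.log (f m) := by
    have h1 : Real.log ((n:ℝ) * g n) ≤ Real.log (f m) :=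
      Real.log_le_log (by positivity) hfm
    rw [Real.log_mul (ne_of_gt hn0) (ne_of_gt hgn0)] at h1
    nlinarith [hgr]
  have hlogm : Real.log m = Real.log n + K := by
    rw [hmn, hK]
    push_cast
    rw [Real.log_mul (ne_of_gt hn0) (by positivity)]
  have hlogm0 : (0:ℝ) < Real.log m := by
    rw [hlogm]; linarith
  have final : e ≤ Real.log (f m) / Real.log m := by
    rw [le_div_iff₀ hlogm0, hlogm]
    have hδK : e * K ≤ δ * Real.log n := by
      have hh : e * K / δ ≤ Real.log n := hlogn_ge
      have := (div_le_iff₀ hδ0).1 hh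
      linarith
    simp only [hδ] at hδK
    nlinarith [hlogf]
  exact_mod_cast final

section GK
variable {A : Type*} [Ring A] [Algebra ℂ A]

lemma one_mem_pow (F₁ : Submodule ℂ A) (hone : (1:A) ∈ F₁) (n : ℕ) : (1:A) ∈ F₁ ^ n :=
  powMono F₁ hone (Nat.zero_le n)
    (show (1:A) ∈ F₁ ^ 0 by rw [pow_zero]; exact Submodule.one_le.1 le_rfl)

lemma rank_one_le (F₁ : Submodule ℂ A) [FiniteDimensional ℂ F₁] (hone : (1:A) ∈ F₁)
    (W : Submodule ℂ A) (h1 : (1:A) ∉ W) (n : ℕ) :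
    1 ≤ Module.finrank ℂ ((F₁ ^ n).map W.mkQ) := by
  haveI := fdPow F₁ n
  haveI : FiniteDimensional ℂ ((F₁ ^ n).map W.mkQ) := Module.Finite.map _ _
  have hmem : W.mkQ 1 ∈ (F₁ ^ n).map W.mkQ := ⟨1, one_mem_pow F₁ hone n, rfl⟩
  have hne : W.mkQ (1:A) ≠ 0 := by
    simp only [Submodule.mkQ_apply, ne_eq, Submodule.Quotient.mk_eq_zero]
    exact h1
  have hpos : 0 < Module.finrank ℂ ((F₁ ^ n).map W.mkQ) :=
    Module.finrank_pos_iff_exists_ne_zero.2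
      ⟨⟨_, hmem⟩, fun hc => hne (congrArg Subtype.val hc)⟩
  omega

lemma gk_ge (F₁ : Submodule ℂ A) [FiniteDimensional ℂ F₁] (W : Submodule ℂ A) :
    lgr (fun n => Module.finrank ℂ ((F₁ ^ n).map W.mkQ)) ≤ gkDimQuot W := by
  unfold gkDimQuot
  exact le_iSup_of_le F₁ (le_iSup_of_le ‹FiniteDimensional ℂ F₁› (le_of_eq rfl))

lemma gk_le (F₁ : Submodule ℂ A) [FiniteDimensional ℂ F₁] (hone : (1:A) ∈ F₁)
    (hgen : ∀ a : A, ∃ i : ℕ, a ∈ F₁ ^ i) (W : Submodule ℂ A)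
    (h1 : ∀ n, 1 ≤ Module.finrank ℂ ((F₁ ^ n).map W.mkQ)) :
    gkDimQuot W ≤ lgr (fun n => Module.finrank ℂ ((F₁ ^ n).map W.mkQ)) := by
  unfold gkDimQuot
  apply iSup_le; intro V; apply iSup_le; intro hV
  haveI := hV
  obtain ⟨s, hs⟩ := (Submodule.fg_iff_finiteDimensional V).2 hV
  choose idx hidx using hgen
  set N := s.sup idx + 1 with hN
  have hN1 : 1 ≤ N := Nat.succ_le_succ (Nat.zero_le _)
  have hVN : V ≤ F₁ ^ N := by
    rw [← hs, Submodule.span_le]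
    intro a ha
    exact powMono F₁ hone
      (le_trans (Finset.le_sup (Finset.mem_coe.1 ha)) (Nat.le_succ _)) (hidx a)
  have hbase : ∀ m, V ^ m ≤ F₁ ^ (N * m) := by
    intro m
    have h1' : V ^ m ≤ (F₁ ^ N) ^ m := by
      induction m with
      | zero => simp
      | succ m ih =>
        rw [pow_succ, pow_succ]
        exact mul_le_mul' ih hVN
    rwa [← pow_mul] at h1'
  have hvm : ∀ m, Module.finrank ℂ ((V ^ m).map W.mkQ)
      ≤ Module.finrank ℂ ((F₁ ^ (N * m)).map W.mkQ) := by
    intro m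
    haveI := fdPow F₁ (N * m)
    haveI : FiniteDimensional ℂ ((F₁ ^ (N * m)).map W.mkQ) := Module.Finite.map _ _
    exact Submodule.finrank_mono (Submodule.map_mono (hbase m))
  exact lgr_comp_le _ _ h1 N hN1 hvm

end GK

/-- Let `A` be a filtered `ℂ`-algebra (filtered by powers of a finite-dimensional
generating subspace `F₁ ∋ 1`) whose associated graded algebra is a finitely generated
commutative domain, `Z ⊆ Z(A)` a central subalgebra, and `J` a two-sided ideal of `A`
with `J ∩ Z = I`.  If `A/IA` is a domain and `GK(A/J) = GK(A/IA)`, then `J = IA`. -/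
theorem ideal_eq_of_gk_eq {A : Type*} [Ring A] [Algebra ℂ A]
    (F₁ : Submodule ℂ A) [FiniteDimensional ℂ F₁] (hone : (1 : A) ∈ F₁)
    (hgen : ∀ a : A, ∃ i : ℕ, a ∈ F₁ ^ i)
    -- `Gr A` is commutative
    (hcomm : ∀ (i j : ℕ), ∀ a ∈ F₁ ^ i, ∀ b ∈ F₁ ^ j,
      a * b - b * a ∈ F₁ ^ (i + j - 1))
    -- `Gr A` is a domain: products of elements with nonzero symbol have nonzero symbol
    (hdom : ∀ (i j : ℕ), ∀ a ∈ F₁ ^ i, ∀ b ∈ F₁ ^ j,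
      a ∉ (if i = 0 then (⊥ : Submodule ℂ A) else F₁ ^ (i - 1)) →
      b ∉ (if j = 0 then (⊥ : Submodule ℂ A) else F₁ ^ (j - 1)) →
      a * b ∉ (if i + j = 0 then (⊥ : Submodule ℂ A) else F₁ ^ (i + j - 1)))
    -- `Z` is a central subalgebra
    (Z : Subalgebra ℂ A) (hZ : ∀ z ∈ Z, ∀ a : A, z * a = a * z)
    -- `J` is a two-sided ideal; `I := J ∩ Z`, generating the ideal `IA`
    (J : TwoSidedIdeal A)
    -- `A / IA` is a domain
    (hquotdom : (∀ a b : A, a * b ∈ Ideal.span ((J : Set A) ∩ (Z : Set A)) →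
        a ∈ Ideal.span ((J : Set A) ∩ (Z : Set A)) ∨
        b ∈ Ideal.span ((J : Set A) ∩ (Z : Set A))) ∧
      (1 : A) ∉ Ideal.span ((J : Set A) ∩ (Z : Set A)))
    -- `GK(A/J) = GK(A/IA)`
    (hGK : gkDimQuot ((TwoSidedIdeal.asIdeal J).restrictScalars ℂ) =
      gkDimQuot ((Ideal.span ((J : Set A) ∩ (Z : Set A))).restrictScalars ℂ)) :
    (J : Set A) = ↑(Ideal.span ((J : Set A) ∩ (Z : Set A))) := by
  classical
  set S : Set A := (J : Set A) ∩ (Z : Set A) with hSdef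
  set IA : Ideal A := Ideal.span S with hIAdef
  have hspan_le : IA ≤ TwoSidedIdeal.asIdeal J := by
    rw [hIAdef, Ideal.span_le]
    rintro a ⟨haJ, _⟩
    exact TwoSidedIdeal.mem_asIdeal.2 haJ
  by_cases hsub : (J : Set A) ⊆ (IA : Set A)
  · apply Set.Subset.antisymm hsub
    intro a ha
    have : a ∈ TwoSidedIdeal.asIdeal J := hspan_le (SetLike.mem_coe.1 ha)
    exact SetLike.mem_coe.2 (TwoSidedIdeal.mem_asIdeal.1 this)
  · exfalso
    rw [Set.not_subset] at hsub
    obtain ⟨x, hxJ', hxIA'⟩ := hsub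
    have hxJ : x ∈ J := SetLike.mem_coe.1 hxJ'
    have hxIA : x ∉ IA := fun h => hxIA' (SetLike.mem_coe.2 h)
    set IA' : Submodule ℂ A := IA.restrictScalars ℂ with hIA'def
    set J' : Submodule ℂ A := (TwoSidedIdeal.asIdeal J).restrictScalars ℂ with hJ'def
    have hmemIA' : ∀ a : A, a ∈ IA' ↔ a ∈ IA := fun a => Iff.rfl
    have hmemJ' : ∀ a : A, a ∈ J' ↔ a ∈ TwoSidedIdeal.asIdeal J := fun a => Iff.rfl
    have h1IA : (1 : A) ∉ IA' := hquotdom.2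
    have h1J : (1 : A) ∉ J' := by
      intro h
      have h1mem : (1:A) ∈ S := ⟨SetLike.mem_coe.2 (TwoSidedIdeal.mem_asIdeal.1 h),
        SetLike.mem_coe.2 Z.one_mem⟩
      exact hquotdom.2 (Submodule.subset_span h1mem)
    set b : ℕ := Module.finrank ℂ F₁ with hbdef
    set f : ℕ → ℕ := fun n => Module.finrank ℂ ((F₁ ^ n).map IA'.mkQ) with hfdef
    set g : ℕ → ℕ := fun n => Module.finrank ℂ ((F₁ ^ n).map J'.mkQ) with hgdef
    have hc1 : ∀ a ∈ F₁, ∀ c ∈ F₁, a * c - c * a ∈ F₁ := by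
      intro a ha c hc
      have := hcomm 1 1 a (by rwa [pow_one]) c (by rwa [pow_one])
      simpa using this
    have hf1 : ∀ n, 1 ≤ f n := fun n => rank_one_le F₁ hone IA' h1IA n
    have hg1 : ∀ n, 1 ≤ g n := fun n => rank_one_le F₁ hone J' h1J n
    have hgpoly : ∀ n, g n ≤ (n + 1) ^ b := by
      intro n
      haveI := fdPow F₁ n
      exact le_trans (Submodule.finrank_map_le _ _) (finrank_pow_le F₁ hone hc1 n)
    -- the element x and its degree
    set d : ℕ := Classical.choose (hgen x) + 1 with hddef
    have hd : 1 ≤ d := Nat.succ_le_succ (Nat.zero_le _)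
    have hxd : x ∈ F₁ ^ d := powMono F₁ hone (Nat.le_succ _) (Classical.choose_spec (hgen x))
    have hIJ' : IA' ≤ J' := fun a ha => hspan_le ha
    have hJx : ∀ v : A, x * v ∈ J' := fun v =>
      TwoSidedIdeal.mem_asIdeal.2 (TwoSidedIdeal.mul_mem_right _ _ _ hxJ)
    have hIx : ∀ v : A, v ∈ IA' → x * v ∈ IA' := fun v hv => Ideal.mul_mem_left _ x hv
    have hreg : ∀ v : A, x * v ∈ IA' → v ∈ IA' := fun v hv =>
      (hquotdom.1 x v hv).resolve_left hxIA
    have hkey : ∀ m, f m + g (m + d) ≤ f (m + d) := fun m =>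
      key_step F₁ x d hxd IA' J' hIJ' hJx hIx hreg m
    have gmono : ∀ {n n' : ℕ}, n ≤ n' → g n ≤ g n' := by
      intro n n' h
      haveI := fdPow F₁ n'
      haveI : FiniteDimensional ℂ ((F₁ ^ n').map J'.mkQ) := Module.Finite.map _ _
      exact Submodule.finrank_mono (Submodule.map_mono (powMono F₁ hone h))
    have hiter : ∀ k n, f n + k * g n ≤ f (n + k * d) := by
      intro k
      induction k with
      | zero => intro n; simp
      | succ k ih =>
        intro n
        have h1 := ih n
        have h2 := hkey (n + k * d)
        have h3 : g n ≤ g (n + k * d + d) := gmono (by omega)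
        have hidx : n + (k + 1) * d = n + k * d + d := by ring
        rw [hidx, Nat.succ_mul]
        omega
    have hgrow : ∀ n, 1 ≤ n → n * g n ≤ f (n + n * d) := fun n _ =>
      le_trans (Nat.le_add_left _ _) (hiter n n)
    -- the limsup quantities
    have hγ0 := lgr_nonneg g
    have hγb := lgr_le_of_poly g b hgpoly
    have hγne_top : lgr g ≠ ⊤ := (lt_of_le_of_lt hγb (EReal.coe_lt_top _)).ne
    have hγne_bot : lgr g ≠ ⊥ := (lt_of_lt_of_le (by simp : (⊥:EReal) < 0) hγ0).ne'
    set γr : ℝ := (lgr g).toReal with hγrdef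
    have hγ : lgr g = (γr : EReal) := (EReal.coe_toReal hγne_top hγne_bot).symm
    have hγr0 : (0:ℝ) ≤ γr := by
      have := hγ0
      rw [hγ] at this
      exact_mod_cast this
    have hchain : lgr f ≤ lgr g := by
      calc lgr f ≤ gkDimQuot IA' := gk_ge F₁ IA'
        _ = gkDimQuot J' := hGK.symm
        _ ≤ lgr g := gk_le F₁ hone hgen J' hg1
    have hgrowth := lgr_growth f g hg1 d hd hgrow (γr - 1/4) (γr + 1/4)
      (by rw [hγ]; exact_mod_cast (by linarith : γr - 1/4 < γr))
      (by linarith) (by linarith)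
    have hfinal : ((γr + 1/4 : ℝ) : EReal) ≤ ((γr : ℝ) : EReal) :=
      hgrowth.trans (hchain.trans (le_of_eq hγ))
    have : γr + 1/4 ≤ γr := by exact_mod_cast hfinal
    linarith
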